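/- The free group F_2 on two generators, equipped with the word metric associated with a free basis, has asymptotic dimension exactly 1. -/

import Mathlib

open Metric Set Function

namespace APC

variable {X Y : Type*}

/-- A family `𝒰` of subsets of a metric space is `r`-disjoint if any two distinct members
are at distance at least `r`. -/
def RDisjoint [MetricSpace X] (r : ℝ) (𝒰 : Set (Set X)) : Prop :=
  ∀ U ∈ 𝒰, ∀ V ∈ 𝒰, U ≠ V → ∀ x ∈ U, ∀ y ∈ V, r ≤ dist x y

/-- A family `𝒰` is `R`-bounded if every member has diameter at most `R`. -/
def RBounded [MetricSpace X] (R : ℝ) (𝒰 : Set (Set X)) : Prop :=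
  ∀ U ∈ 𝒰, ∀ x ∈ U, ∀ y ∈ U, dist x y ≤ R

/-- A family is uniformly bounded if it is `R`-bounded for some `R > 0`. -/
def UnifBounded [MetricSpace X] (𝒰 : Set (Set X)) : Prop :=
  ∃ R : ℝ, 0 < R ∧ RBounded R 𝒰

/-- `asdim X ≤ n`. -/
def AsdimLE (X : Type*) [MetricSpace X] (n : ℕ) : Prop :=
  ∀ r : ℝ, 0 < r → ∃ 𝒰 : Fin (n + 1) → Set (Set X),
    (∀ i, UnifBounded (𝒰 i)) ∧ (∀ i, RDisjoint r (𝒰 i)) ∧ (⋃ i, ⋃₀ 𝒰 i) = Set.univ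

/-- `X` has finite asymptotic dimension. -/
def HasFiniteAsdim (X : Type*) [MetricSpace X] : Prop := ∃ n : ℕ, AsdimLE X n

/-- Asymptotic property C. -/
def HasAPC (X : Type*) [MetricSpace X] : Prop :=
  ∀ R : ℕ → ℝ, (∀ i, 0 < R i) → StrictMono R →
    ∃ n : ℕ, ∃ 𝒰 : Fin (n + 1) → Set (Set X),
      (∀ i, UnifBounded (𝒰 i)) ∧ (∀ i : Fin (n + 1), RDisjoint (R i) (𝒰 i)) ∧
      (⋃ i, ⋃₀ 𝒰 i) = Set.univ

/-- `M^a`, the derivative of a collection of finite nonempty subsets of `ℕ`. -/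
def deriv (M : Set (Finset ℕ)) (a : ℕ) : Set (Finset ℕ) :=
  {τ | τ.Nonempty ∧ a ∉ τ ∧ insert a τ ∈ M}

/-- `OrdLE α M` means `Ord M ≤ α` in the sense of Radul: either `M = ∅`
(so that `Ord M = 0`), or `Ord M^a < α` for every `a : ℕ`.  Defined by
well-founded recursion on the ordinal `α`. -/
def OrdLE : Ordinal.{0} → Set (Finset ℕ) → Prop :=
  Ordinal.lt_wf.fix (C := fun _ => Set (Finset ℕ) → Prop)
    (fun α IH M => M = ∅ ∨ ∀ a : ℕ, ∃ β : Ordinal.{0}, ∃ hβ : β < α, IH β hβ (deriv M a))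

/-- The collection `A(X,d)` of finite nonempty subsets `σ ⊆ ℕ` such that there is no
covering of `X` by uniformly bounded families `𝒰ᵢ` (`i ∈ σ`), each `i`-disjoint. -/
def AClass (X : Type*) [MetricSpace X] : Set (Finset ℕ) :=
  {σ | σ.Nonempty ∧ ¬ ∃ 𝒰 : ℕ → Set (Set X),
      (∀ i ∈ σ, UnifBounded (𝒰 i)) ∧ (∀ i ∈ σ, RDisjoint (i : ℝ) (𝒰 i)) ∧
      (⋃ i ∈ σ, ⋃₀ 𝒰 i) = Set.univ}

/-- `trasdim X ≤ α`. -/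
def TrasdimLE (X : Type*) [MetricSpace X] (α : Ordinal.{0}) : Prop :=
  OrdLE α (AClass X)

/-- The `(m,n)`-DTUT property: disjointness of the `(m,n)`-tiling through uniform
translation. -/
def DTUT (X : Type*) [MetricSpace X] (m n : ℕ) : Prop :=
  ∃ F : Fin m → ℕ,
    ∀ h : ℕ+ → ℕ+, ∀ k : Fin (m + 1) → ℕ+, StrictMono k →
      ∃ C : (Fin m → ℕ+) → Fin (n + 1) → Set (Set X),
      ∃ D : (Fin m → ℕ+) → (i : Fin m) → Fin (F i + 1) → Set (Set X),
        ∀ l : Fin m → ℕ+, (∀ r : Fin m, l r ≤ h (k r.succ)) →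
          ((∀ j, UnifBounded (C l j)) ∧
           (∀ i s, UnifBounded (D l i s)) ∧
           (∀ j, RDisjoint ((k 0 : ℕ) : ℝ) (C l j)) ∧
           (∀ (i : Fin m) (s : Fin (F i + 1)), RDisjoint ((k i.succ : ℕ) : ℝ) (D l i s)) ∧
           ((⋃ j, ⋃₀ C l j) ∪ (⋃ i, ⋃ s, ⋃₀ D l i s) = Set.univ)) ∧
          (∀ (i : Fin m) (s : Fin (F i + 1)),
            (∀ t : ℕ+, t ≤ h (k i.succ) →
              (⋃₀ D (Function.update l i t) i s).Nonempty) ∧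
            (∀ t t' : ℕ+, t ≤ h (k i.succ) → t' ≤ h (k i.succ) → t ≠ t' →
              Disjoint (⋃₀ D (Function.update l i t) i s)
                (⋃₀ D (Function.update l i t') i s)) ∧
            RDisjoint ((k i.succ : ℕ) : ℝ)
              (⋃ t ∈ {t : ℕ+ | t ≤ h (k i.succ)}, D (Function.update l i t) i s))

/-- The word length of `g` with respect to the symmetrized generating set `S ∪ S⁻¹`. -/
noncomputable def wordLength {G : Type*} [Group G] (S : Set G) (g : G) : ℕ :=
  sInf {n : ℕ | ∃ L : List G, (∀ x ∈ L, x ∈ S ∨ x⁻¹ ∈ S) ∧ L.prod = g ∧ L.length = n}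

/-- A group is FC if every conjugacy class is finite. -/
def IsFCGroup (G : Type*) [Group G] : Prop :=
  ∀ x : G, Set.Finite {y : G | ∃ g : G, g * x * g⁻¹ = y}

/-- A metric on a countable discrete space is proper if every ball is finite. -/
def ProperMet (X : Type*) [MetricSpace X] : Prop :=
  ∀ (x : X) (R : ℝ), (Metric.closedBall x R).Finite

/-- Left invariance of a metric on a group. -/
def LeftInvariant (G : Type*) [Group G] [MetricSpace G] : Prop :=
  ∀ g x y : G, dist (g * x) (g * y) = dist x y

/-- Bornologous maps. -/
def Bornologous [MetricSpace X] [MetricSpace Y] (f : X → Y) : Prop :=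
  ∀ R : ℝ, 0 < R → ∃ P : ℝ, 0 < P ∧ ∀ x y : X, dist x y < R → dist (f x) (f y) < P

/-- Coarse embeddings. -/
def CoarseEmbedding [MetricSpace X] [MetricSpace Y] (f : X → Y) : Prop :=
  ∃ ρminus ρplus : ℝ → ℝ, Monotone ρminus ∧ Monotone ρplus ∧
    Filter.Tendsto ρminus Filter.atTop Filter.atTop ∧
    (∀ x y : X, ρminus (dist x y) ≤ dist (f x) (f y) ∧ dist (f x) (f y) ≤ ρplus (dist x y))

/-- Coarse equivalences: coarse embeddings with coarsely dense image. -/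
def CoarseEquiv [MetricSpace X] [MetricSpace Y] (f : X → Y) : Prop :=
  CoarseEmbedding f ∧ ∃ C : ℝ, 0 < C ∧ ∀ y : Y, ∃ x : X, dist y (f x) ≤ C

end APC

open APC Set

namespace FGAux

open FreeGroup List

abbrev G := FreeGroup (Fin 2)
abbrev SS : Set G := Set.range (FreeGroup.of : Fin 2 → G)

def R2 (a b : Fin 2 × Bool) : Prop := ¬(a.1 = b.1 ∧ a.2 = !b.2)

lemma reduce_eq_self : ∀ {w : List (Fin 2 × Bool)}, List.Chain' R2 w →
    FreeGroup.reduce w = w := by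
  intro w
  induction w with
  | nil => intro _; rfl
  | cons x w ih =>
    intro h
    have hw : FreeGroup.reduce w = w := ih h.tail
    rw [FreeGroup.reduce.cons, hw]
    cases w with
    | nil => rfl
    | cons hd tl =>
      have hr : R2 x hd := (List.isChain_cons_cons.mp h).1
      simp only [R2] at hr
      simp [hr]

lemma chain_of_reduce : ∀ {w : List (Fin 2 × Bool)}, FreeGroup.reduce w = w →
    List.Chain' R2 w := by
  intro w
  induction w with
  | nil => intro _; exact List.isChain_nil
  | cons x w ih =>
    intro h
    rw [FreeGroup.reduce.cons] at h
    rcases hw : FreeGroup.reduce w with _ | ⟨hd, tl⟩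
    · rw [hw] at h
      simp only [List.cons.injEq] at h
      rw [← h.2]
      exact List.isChain_singleton x
    · rw [hw] at h
      replace h : (if x.1 = hd.1 ∧ x.2 = !hd.2 then tl else x :: hd :: tl) = x :: w := h
      by_cases hc : x.1 = hd.1 ∧ x.2 = !hd.2
      · rw [if_pos hc] at h
        exfalso
        have h1 : (FreeGroup.reduce w).length ≤ w.length := FreeGroup.Red.length_le reduce.red
        rw [hw] at h1
        have h2 : tl.length = w.length + 1 := by rw [h]; simp
        simp at h1
        omega
      · rw [if_neg hc] at h
        have h3 : w = hd :: tl := by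
          simpa using h.symm
        subst h3
        exact List.isChain_cons_cons.mpr ⟨hc, ih hw⟩

lemma chain_toWord (x : G) : List.Chain' R2 x.toWord :=
  chain_of_reduce x.reduce_toWord

lemma toWord_take (x : G) (p : ℕ) :
    (FreeGroup.mk (x.toWord.take p)).toWord = x.toWord.take p := by
  rw [FreeGroup.toWord_mk]
  exact reduce_eq_self ((chain_toWord x).prefix (List.take_prefix p x.toWord))

lemma mk_single_true (i : Fin 2) : FreeGroup.mk [(i, true)] = FreeGroup.of i := rfl

lemma mk_single_false (i : Fin 2) : FreeGroup.mk [(i, false)] = (FreeGroup.of i)⁻¹ := by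
  rw [← mk_single_true, FreeGroup.inv_mk]
  simp [FreeGroup.invRev]

lemma mk_single_mem (l : Fin 2 × Bool) :
    FreeGroup.mk [l] ∈ SS ∨ (FreeGroup.mk [l])⁻¹ ∈ SS := by
  rcases l with ⟨i, b⟩
  cases b
  · right
    rw [mk_single_false, inv_inv]
    exact ⟨i, rfl⟩
  · left
    rw [mk_single_true]
    exact ⟨i, rfl⟩

lemma prod_map_mk : ∀ w : List (Fin 2 × Bool),
    (w.map fun l => FreeGroup.mk [l]).prod = FreeGroup.mk w := by
  intro w
  induction w with
  | nil => simp [FreeGroup.one_eq_mk]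
  | cons l w ih =>
    rw [List.map_cons, List.prod_cons, ih, FreeGroup.mul_mk]
    rfl

lemma norm_def (x : G) : FreeGroup.norm x = x.toWord.length := rfl

lemma norm_prod_le : ∀ (L : List G), (∀ g ∈ L, g ∈ SS ∨ g⁻¹ ∈ SS) →
    FreeGroup.norm L.prod ≤ L.length := by
  intro L
  induction L with
  | nil => intro _; simp
  | cons g L ih =>
    intro h
    have h1 : FreeGroup.norm g ≤ 1 := by
      rcases h g List.mem_cons_self with ⟨i, hi⟩ | ⟨i, hi⟩
      · rw [← hi, FreeGroup.norm_of]
      · rw [← FreeGroup.norm_inv_eq, ← hi, FreeGroup.norm_of]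
    calc FreeGroup.norm (g :: L).prod = FreeGroup.norm (g * L.prod) := by rw [List.prod_cons]
      _ ≤ FreeGroup.norm g + FreeGroup.norm L.prod := FreeGroup.norm_mul_le _ _
      _ ≤ 1 + L.length := add_le_add h1 (ih fun y hy => h y (List.mem_cons_of_mem _ hy))
      _ = (g :: L).length := by simp [add_comm]

lemma exists_letters (x : G) : ∃ L : List G,
    (∀ g ∈ L, g ∈ SS ∨ g⁻¹ ∈ SS) ∧ L.prod = x ∧ L.length = FreeGroup.norm x := by
  refine ⟨x.toWord.map fun l => FreeGroup.mk [l], ?_, ?_, by simp [norm_def]⟩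
  · intro g hg
    simp only [List.mem_map] at hg
    obtain ⟨l, _, rfl⟩ := hg
    exact mk_single_mem l
  · rw [prod_map_mk, FreeGroup.mk_toWord]

lemma wl_eq (x : G) : APC.wordLength SS x = FreeGroup.norm x := by
  obtain ⟨L, hL, hprod, hlen⟩ := exists_letters x
  unfold APC.wordLength
  apply _root_.le_antisymm
  · exact Nat.sInf_le ⟨L, hL, hprod, hlen⟩
  · refine le_csInf ⟨FreeGroup.norm x, L, hL, hprod, hlen⟩ ?_
    rintro m ⟨M, hM, rfl, rfl⟩
    exact norm_prod_le M hM

lemma step_toWord (x : G) (l : Fin 2 × Bool) :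
    ∃ l' : Fin 2 × Bool, (x * FreeGroup.mk [l]).toWord = x.toWord ++ [l'] ∨
      x.toWord = (x * FreeGroup.mk [l]).toWord ++ [l'] := by
  rcases List.eq_nil_or_concat x.toWord with h | ⟨w', a, h⟩
  · refine ⟨l, Or.inl ?_⟩
    have hx : x = 1 := FreeGroup.toWord_eq_nil_iff.mp h
    rw [hx, one_mul, FreeGroup.toWord_mk, FreeGroup.reduce_singleton, FreeGroup.toWord_one]
    simp
  · rw [List.concat_eq_append] at h
    by_cases hc : a.1 = l.1 ∧ a.2 = !l.2
    · refine ⟨a, Or.inr ?_⟩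
      have hx : x = FreeGroup.mk w' * FreeGroup.mk [a] := by
        rw [FreeGroup.mul_mk, ← h, FreeGroup.mk_toWord]
      have hcancel : FreeGroup.mk [a] * FreeGroup.mk [l] = 1 := by
        have ha : a = (l.1, !l.2) := Prod.ext hc.1 hc.2
        rcases l with ⟨i, b⟩
        cases b
        · rw [ha]
          simp only [Bool.not_false]
          rw [mk_single_true, mk_single_false, mul_inv_cancel]
        · rw [ha]
          simp only [Bool.not_true]
          rw [mk_single_true, mk_single_false, inv_mul_cancel]
      have hxl : x * FreeGroup.mk [l] = FreeGroup.mk w' := by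
        rw [hx, mul_assoc, hcancel, mul_one]
      have hw' : (FreeGroup.mk w').toWord = w' := by
        rw [FreeGroup.toWord_mk]
        refine reduce_eq_self ((chain_toWord x).prefix ?_)
        rw [h]
        exact List.prefix_append _ _
      rw [hxl, hw', h]
    · refine ⟨l, Or.inl ?_⟩
      have hch : List.Chain' R2 (x.toWord ++ [l]) := by
        apply List.isChain_append.mpr
        refine ⟨chain_toWord x, List.isChain_singleton l, ?_⟩
        intro y hy z hz
        rw [h, List.getLast?_concat] at hy
        simp only [List.head?_cons, Option.mem_def, Option.some.injEq] at hy hz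
        subst hy; subst hz
        exact hc
      have hmk : x * FreeGroup.mk [l] = FreeGroup.mk (x.toWord ++ [l]) := by
        rw [← FreeGroup.mul_mk, FreeGroup.mk_toWord]
      rw [hmk, FreeGroup.toWord_mk, reduce_eq_self hch]

def phival (v w : List (Fin 2 × Bool)) : ℤ :=
  if v <+: w then (w.length : ℤ) - v.length else 0

def phi (v : List (Fin 2 × Bool)) (x : G) : ℤ := phival v x.toWord

lemma phival_concat (v w : List (Fin 2 × Bool)) (l : Fin 2 × Bool) :
    |phival v (w ++ [l]) - phival v w| ≤ 1 := by
  unfold phival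
  by_cases h1 : v <+: w
  · rw [if_pos h1, if_pos (h1.trans (List.prefix_append w [l]))]
    simp
  · rw [if_neg h1]
    by_cases h2 : v <+: w ++ [l]
    · rw [if_pos h2]
      have hlen : v.length = w.length + 1 := by
        have hle : v.length ≤ w.length + 1 := by simpa using h2.length_le
        by_contra hne
        exact h1 (List.prefix_of_prefix_length_le h2 (List.prefix_append w [l]) (by omega))
      rw [hlen]
      simp
    · rw [if_neg h2]; simp

lemma phi_step (v : List (Fin 2 × Bool)) (x : G) (l : Fin 2 × Bool) :
    |phi v (x * FreeGroup.mk [l]) - phi v x| ≤ 1 := by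
  obtain ⟨l', h | h⟩ := step_toWord x l
  · unfold phi; rw [h]; exact phival_concat v _ l'
  · unfold phi; rw [h, abs_sub_comm]; exact phival_concat v _ l'

lemma eq_mk_single {g : G} (hg : g ∈ SS ∨ g⁻¹ ∈ SS) :
    ∃ l : Fin 2 × Bool, g = FreeGroup.mk [l] := by
  rcases hg with ⟨i, hi⟩ | ⟨i, hi⟩
  · exact ⟨(i, true), by rw [mk_single_true, hi]⟩
  · refine ⟨(i, false), ?_⟩
    rw [mk_single_false, hi, inv_inv]

lemma phi_prod (v : List (Fin 2 × Bool)) : ∀ (L : List G),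
    (∀ g ∈ L, g ∈ SS ∨ g⁻¹ ∈ SS) → ∀ x : G,
    |phi v (x * L.prod) - phi v x| ≤ (L.length : ℤ) := by
  intro L
  induction L with
  | nil => intro _ x; simp
  | cons g L ih =>
    intro h x
    obtain ⟨l, rfl⟩ := eq_mk_single (h g List.mem_cons_self)
    have h1 := ih (fun y hy => h y (List.mem_cons_of_mem _ hy)) (x * FreeGroup.mk [l])
    have h2 := phi_step v x l
    calc |phi v (x * (FreeGroup.mk [l] :: L).prod) - phi v x|
        = |phi v (x * FreeGroup.mk [l] * L.prod) - phi v x| := by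
          rw [List.prod_cons, mul_assoc]
      _ ≤ |phi v (x * FreeGroup.mk [l] * L.prod) - phi v (x * FreeGroup.mk [l])| +
          |phi v (x * FreeGroup.mk [l]) - phi v x| := abs_sub_le _ _ _
      _ ≤ (L.length : ℤ) + 1 := add_le_add h1 h2
      _ = ((FreeGroup.mk [l] :: L).length : ℤ) := by simp [add_comm]

lemma phi_lip (v : List (Fin 2 × Bool)) (x y : G) :
    |phi v x - phi v y| ≤ (FreeGroup.norm (x⁻¹ * y) : ℤ) := by
  obtain ⟨L, hL, hprod, hlen⟩ := exists_letters (x⁻¹ * y)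
  have h := phi_prod v L hL x
  rw [hprod, mul_inv_cancel_left] at h
  rw [abs_sub_comm]
  rw [← hlen]
  exact h

lemma norm_le_add (x y : G) :
    FreeGroup.norm y ≤ FreeGroup.norm x + FreeGroup.norm (x⁻¹ * y) := by
  have := FreeGroup.norm_mul_le x (x⁻¹ * y)
  rwa [mul_inv_cancel_left] at this

lemma sub_le_two_mul {n len k : ℕ} (hn : 0 < n) (hk : k = len / n) :
    len - (k - 1) * n ≤ 2 * n := by
  have h1 : k * n ≤ len := by rw [hk]; exact Nat.div_mul_le_self len n
  have h2 : len < (k + 1) * n := by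
    refine (Nat.div_lt_iff_lt_mul hn).mp ?_
    omega
  have h3 : (k - 1) * n = k * n - n := by rw [Nat.sub_mul, one_mul]
  have h4 : (k + 1) * n = k * n + n := by ring
  omega

lemma gap_lemma {n la lb ka kb : ℕ} (hn : 0 < n) (ha : ka = la / n) (hb : kb = lb / n)
    (h : ka + 2 ≤ kb) : la + n ≤ lb := by
  have h2 : la < (ka + 1) * n := by
    refine (Nat.div_lt_iff_lt_mul hn).mp ?_
    omega
  have h5 : (ka + 2) * n ≤ kb * n := Nat.mul_le_mul_right n h
  have h6 : kb * n ≤ lb := by rw [hb]; exact Nat.div_mul_le_self lb n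
  have h7 : (ka + 2) * n = (ka + 1) * n + n := by ring
  omega

lemma low_lemma {n len k : ℕ} (hk : k = len / n) (h1 : 1 ≤ k) : (k - 1) * n + n ≤ len := by
  have h2 : k * n ≤ len := by rw [hk]; exact Nat.div_mul_le_self len n
  have h3 : (k - 1) * n + n = k * n := by
    have hkk : k - 1 + 1 = k := by omega
    calc (k - 1) * n + n = (k - 1 + 1) * n := by ring
      _ = k * n := by rw [hkk]
  omega

def kk (n : ℕ) (x : G) : ℕ := FreeGroup.norm x / n

def pp (n : ℕ) (x : G) : ℕ := (kk n x - 1) * n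

def anc (n : ℕ) (x : G) : G := FreeGroup.mk (x.toWord.take (pp n x))

def cl (n : ℕ) (x : G) : Set G := {y | kk n y = kk n x ∧ anc n y = anc n x}

lemma pp_le (n : ℕ) (x : G) : pp n x ≤ x.toWord.length := by
  calc pp n x ≤ kk n x * n := Nat.mul_le_mul_right n (Nat.sub_le _ _)
    _ ≤ x.toWord.length := Nat.div_mul_le_self _ n

lemma anc_norm_le {n : ℕ} (hn : 0 < n) (x : G) :
    FreeGroup.norm ((anc n x)⁻¹ * x) ≤ 2 * n := by
  have hsplit : anc n x * FreeGroup.mk (x.toWord.drop (pp n x)) = x := by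
    unfold anc
    rw [FreeGroup.mul_mk, List.take_append_drop, FreeGroup.mk_toWord]
  have hinv : (anc n x)⁻¹ * x = FreeGroup.mk (x.toWord.drop (pp n x)) := by
    rw [inv_mul_eq_iff_eq_mul]
    exact hsplit.symm
  rw [hinv]
  calc FreeGroup.norm (FreeGroup.mk (x.toWord.drop (pp n x)))
      ≤ (x.toWord.drop (pp n x)).length := FreeGroup.norm_mk_le
    _ = x.toWord.length - pp n x := List.length_drop
    _ ≤ 2 * n := sub_le_two_mul hn rfl

lemma disj_diff_k {n : ℕ} (hn : 0 < n) {a b : G} (h : kk n a + 2 ≤ kk n b) :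
    n ≤ FreeGroup.norm (a⁻¹ * b) := by
  have hg : FreeGroup.norm a + n ≤ FreeGroup.norm b := gap_lemma hn rfl rfl h
  have h2 := norm_le_add a b
  omega

lemma disj_same_k {n : ℕ} (hn : 0 < n) {a b : G} (hk : kk n a = kk n b)
    (hne : anc n a ≠ anc n b) : n ≤ FreeGroup.norm (a⁻¹ * b) := by
  have hk1 : 1 ≤ kk n a := by
    by_contra h0
    push_neg at h0
    have hka : kk n a = 0 := by omega
    have hkb : kk n b = 0 := by omega
    apply hne
    unfold anc pp
    rw [hka, hkb]
    have h01 : ((0:ℕ) - 1) * n = 0 := by simp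
    rw [h01, List.take_zero, List.take_zero]
  set v := a.toWord.take (pp n a) with hv
  have hpa : pp n a ≤ a.toWord.length := pp_le n a
  have hvlen : v.length = pp n a := by
    rw [hv, List.length_take]
    exact min_eq_left hpa
  have hnot : ¬ (v <+: b.toWord) := by
    intro hpre
    apply hne
    have hveq : v = b.toWord.take v.length := List.prefix_iff_eq_take.mp hpre
    have hppab : pp n b = pp n a := by unfold pp; rw [hk]
    show FreeGroup.mk (a.toWord.take (pp n a)) = FreeGroup.mk (b.toWord.take (pp n b))
    rw [hppab, ← hvlen, ← hveq, hvlen, ← hv]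
  have hphia : phi v a = (a.toWord.length : ℤ) - pp n a := by
    unfold phi phival
    rw [if_pos (by rw [hv]; exact List.take_prefix _ _), hvlen]
  have hphib : phi v b = 0 := by
    unfold phi phival
    rw [if_neg hnot]
  have hlow : pp n a + n ≤ FreeGroup.norm a := low_lemma rfl hk1
  have hlip := phi_lip v a b
  rw [hphia, hphib, sub_zero] at hlip
  have habs : (a.toWord.length : ℤ) - pp n a ≤ |(a.toWord.length : ℤ) - (pp n a : ℤ)| :=
    le_abs_self _
  have hlena : a.toWord.length = FreeGroup.norm a := rfl
  omega


end FGAux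


/-- The free group on two generators, with the word metric of a free
basis, has asymptotic dimension exactly `1`. -/
theorem freeGroup_asdim_eq_one [MetricSpace (FreeGroup (Fin 2))]
    (hword : ∀ x y : FreeGroup (Fin 2),
      dist x y = (wordLength (Set.range (FreeGroup.of : Fin 2 → FreeGroup (Fin 2)))
        (x⁻¹ * y) : ℝ)) :
    AsdimLE (FreeGroup (Fin 2)) 1 ∧ ¬ AsdimLE (FreeGroup (Fin 2)) 0 := by
  have hdist : ∀ x y : FreeGroup (Fin 2), dist x y = (FreeGroup.norm (x⁻¹ * y) : ℝ) := by
    intro x y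
    rw [hword x y, FGAux.wl_eq]
  constructor
  · -- asdim ≤ 1
    intro r hr
    set n : ℕ := ⌈r⌉₊ with hn
    have hn0 : 0 < n := Nat.ceil_pos.mpr hr
    have hrn : r ≤ (n : ℝ) := Nat.le_ceil r
    refine ⟨fun i => {C | ∃ x, FGAux.kk n x % 2 = (i : ℕ) ∧ C = FGAux.cl n x}, ?_, ?_, ?_⟩
    · -- uniformly bounded
      intro i
      refine ⟨4 * (n : ℝ) + 1, by positivity, ?_⟩
      rintro C ⟨x, -, rfl⟩ a ⟨hka, haa⟩ b ⟨hkb, hab⟩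
      have haab : FGAux.anc n a = FGAux.anc n b := by rw [haa, hab]
      have d1 : dist a (FGAux.anc n a) ≤ ((2 * n : ℕ) : ℝ) := by
        rw [dist_comm, hdist]
        exact Nat.cast_le.mpr (FGAux.anc_norm_le hn0 a)
      have d2 : dist (FGAux.anc n a) b ≤ ((2 * n : ℕ) : ℝ) := by
        rw [haab, hdist]
        exact Nat.cast_le.mpr (FGAux.anc_norm_le hn0 b)
      calc dist a b ≤ dist a (FGAux.anc n a) + dist (FGAux.anc n a) b := dist_triangle _ _ _
        _ ≤ ((2 * n : ℕ) : ℝ) + ((2 * n : ℕ) : ℝ) := add_le_add d1 d2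
        _ ≤ 4 * (n : ℝ) + 1 := by push_cast; linarith
    · -- r-disjoint
      intro i U hU V hV hUV a ha b hb
      obtain ⟨x, hxp, rfl⟩ := hU
      obtain ⟨y, hyp, rfl⟩ := hV
      obtain ⟨hka, haa⟩ := ha
      obtain ⟨hkb, hab⟩ := hb
      have hmain : FGAux.kk n a ≠ FGAux.kk n b ∨ FGAux.anc n a ≠ FGAux.anc n b := by
        by_contra hcon
        push_neg at hcon
        apply hUV
        ext z
        simp only [FGAux.cl, Set.mem_setOf_eq]
        rw [← hka, ← haa, hcon.1, hcon.2, hkb, hab]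
      have hpar : FGAux.kk n a % 2 = FGAux.kk n b % 2 := by rw [hka, hkb, hxp, hyp]
      have hfin : n ≤ FreeGroup.norm (a⁻¹ * b) ∨ n ≤ FreeGroup.norm (b⁻¹ * a) := by
        by_cases hkab : FGAux.kk n a = FGAux.kk n b
        · have hne : FGAux.anc n a ≠ FGAux.anc n b := by tauto
          exact Or.inl (FGAux.disj_same_k hn0 hkab hne)
        · have h2 : FGAux.kk n a + 2 ≤ FGAux.kk n b ∨ FGAux.kk n b + 2 ≤ FGAux.kk n a := by
            omega
          rcases h2 with h | h
          · exact Or.inl (FGAux.disj_diff_k hn0 h)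
          · exact Or.inr (FGAux.disj_diff_k hn0 h)
      rcases hfin with h | h
      · rw [hdist]
        exact hrn.trans (Nat.cast_le.mpr h)
      · rw [dist_comm, hdist]
        exact hrn.trans (Nat.cast_le.mpr h)
    · -- cover
      ext g
      simp only [Set.mem_iUnion, Set.mem_sUnion, Set.mem_univ, iff_true]
      exact ⟨⟨FGAux.kk n g % 2, by omega⟩, FGAux.cl n g, ⟨g, rfl, rfl⟩, ⟨rfl, rfl⟩⟩
  · -- asdim ≠ 0
    intro h0
    obtain ⟨𝒰, hb, hd, hc⟩ := h0 2 (by norm_num)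
    have h1 : (1 : FreeGroup (Fin 2)) ∈ ⋃ i, ⋃₀ 𝒰 i := by rw [hc]; trivial
    simp only [Set.mem_iUnion, Set.mem_sUnion] at h1
    obtain ⟨i, U, hU, h1U⟩ := h1
    set a : FreeGroup (Fin 2) := FreeGroup.of 0 with hav
    have hstep : ∀ m : ℕ, a ^ m ∈ U := by
      intro m
      induction m with
      | zero => simpa using h1U
      | succ m ih =>
        have hm : a ^ (m + 1) ∈ ⋃ j, ⋃₀ 𝒰 j := by rw [hc]; trivial
        simp only [Set.mem_iUnion, Set.mem_sUnion] at hm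
        obtain ⟨j, V, hV, hmV⟩ := hm
        have hji : j = i := Subsingleton.elim (α := Fin 1) j i
        rw [hji] at hV
        by_cases hUV : V = U
        · rw [← hUV]; exact hmV
        · exfalso
          have hdj := hd i V hV U hU hUV (a ^ (m + 1)) hmV (a ^ m) ih
          have hone : dist (a ^ (m + 1)) (a ^ m) = 1 := by
            rw [hdist]
            have he : (a ^ (m + 1))⁻¹ * a ^ m = a⁻¹ := by group
            rw [he, FreeGroup.norm_inv_eq, hav, FreeGroup.norm_of]
            norm_num
          rw [hone] at hdj
          norm_num at hdj
    obtain ⟨R, hR, hRb⟩ := hb i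
    have hmR : ∀ m : ℕ, (m : ℝ) ≤ R := by
      intro m
      have hle := hRb U hU (a ^ m) (hstep m) 1 h1U
      rw [hdist] at hle
      have he : (a ^ m)⁻¹ * 1 = (a ^ m)⁻¹ := mul_one _
      rw [he, FreeGroup.norm_inv_eq, hav, FreeGroup.norm_of_pow] at hle
      exact hle
    have hcon := hmR (⌈R⌉₊ + 1)
    have hRc := Nat.le_ceil R
    push_cast at hcon
    linarith
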